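/- Let E be a finite-dimensional Hilbert space, let ν_1,…,ν_s ∈ ℕ^d be distinct multi-indices, let E_1,…,E_s ⊆ E be subspaces, and let M ⊆ H²(ℂ^d) ⊗ E be the closed invariant subspace for the d-shift generated by z^{ν_1} ⊗ E_1, …, z^{ν_s} ⊗ E_s (i.e., M is the closed span of all vectors f_1(z)z^{ν_1} ⊗ ζ_1 + ⋯ + f_s(z)z^{ν_s} ⊗ ζ_s with f_j ∈ ℂ[z_1,…,z_d] and ζ_j ∈ E_j). For n ∈ ℤ^d define the spectral subspace M(n) = {ξ ∈ M : Γ(λ)ξ = λ^n ξ for all λ ∈ 𝕋^d}, and for each k define E_k(n) = E_k if ν_k ≤ n (coordinatewise) and E_k(n) = {0} otherwise, and set E(n) = E_1(n) + ⋯ + E_s(n). Then M(n) = {0} unless n ≥ 0, and for n ≥ 0 one has M(n) = z^n ⊗ E(n) = {z^n ⊗ ζ : ζ ∈ E(n)}. -/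

import Mathlib

open scoped ENNReal

noncomputable section

set_option synthInstance.maxHeartbeats 400000
set_option maxHeartbeats 1000000

namespace Arveson

/-- `‖z^n‖²` in the Drury–Arveson space `H²(ℂ^d)`: `n₁!⋯n_d!/(n₁+⋯+n_d)!`. -/
def daWeight {d : ℕ} (n : Fin d → ℕ) : ℝ :=
  ((∏ i, (n i).factorial : ℕ) : ℝ) / (((∑ i, n i).factorial : ℕ) : ℝ)

/-- An abstract presentation of the `d`-shift `(S₁,…,S_d)` acting on `H²(ℂ^d) ⊗ E`
(the symmetric Fock space / Drury–Arveson space with coefficients in `E`).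
`mono n` sends `ζ : E` to the monomial `z^n ⊗ ζ`; the axioms say that the monomials are
mutually orthogonal with `⟪z^n ⊗ ζ, z^n ⊗ η⟫ = (n₁!⋯n_d!/(n₁+⋯+n_d)!)·⟪ζ, η⟫`, that
they span a dense subspace, and that `S_k (z^n ⊗ ζ) = z^{n+e_k} ⊗ ζ`.  These axioms
determine the `d`-shift of rank `dim E` uniquely up to unitary equivalence. -/
structure DShift (d : ℕ) (E : Type*) [NormedAddCommGroup E] [InnerProductSpace ℂ E]
    (H : Type*) [NormedAddCommGroup H] [InnerProductSpace ℂ H] where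
  mono : (Fin d → ℕ) → E →ₗ[ℂ] H
  S : Fin d → H →L[ℂ] H
  inner_mono : ∀ (n m : Fin d → ℕ) (ζ η : E),
    (inner ℂ (mono n ζ) (mono m η) : ℂ) =
      if n = m then (daWeight n : ℂ) * (inner ℂ ζ η : ℂ) else 0
  total : (Submodule.span ℂ {x : H | ∃ n ζ, x = mono n ζ}).topologicalClosure = ⊤
  shift_mono : ∀ (k : Fin d) (n : Fin d → ℕ) (ζ : E),
    S k (mono n ζ) = mono (fun i => if i = k then n i + 1 else n i) ζ

variable {d : ℕ} {E : Type*} [NormedAddCommGroup E] [InnerProductSpace ℂ E]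
  {H₀ : Type*} [NormedAddCommGroup H₀] [InnerProductSpace ℂ H₀]

/-- `M` is invariant under each of the operators `S₁,…,S_d`. -/
def IsInvariant (D : DShift d E H₀) (M : Submodule ℂ H₀) : Prop :=
  ∀ k : Fin d, ∀ x ∈ M, D.S k x ∈ M

/-- `M` is a closed invariant subspace for the `d`-shift which is generated, as a closed
invariant subspace, by a set `F` of monomials `z^n ⊗ ζ`: that is, `M` is the smallest
closed invariant subspace containing `F`. -/
def IsMonomialGenerated (D : DShift d E H₀) (M : Submodule ℂ H₀) : Prop :=
  IsClosed (M : Set H₀) ∧ IsInvariant D M ∧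
    ∃ F : Set H₀, (∀ f ∈ F, ∃ n ζ, f = D.mono n ζ) ∧ F ⊆ (M : Set H₀) ∧
      ∀ N : Submodule ℂ H₀, IsClosed (N : Set H₀) → IsInvariant D N →
        F ⊆ (N : Set H₀) → M ≤ N

lemma daWeight_pos (n : Fin d → ℕ) : 0 < daWeight n :=
  div_pos (by exact_mod_cast Finset.prod_pos fun i _ => (n i).factorial_pos)
    (by exact_mod_cast (Nat.factorial_pos _))

lemma span_closure_vanish (f : H₀ →L[ℂ] ℂ) (s : Set H₀) (hs : ∀ x ∈ s, f x = 0) :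
    ∀ x ∈ (Submodule.span ℂ s).topologicalClosure, f x = 0 := by
  have h1 : Submodule.span ℂ s ≤ LinearMap.ker (f : H₀ →ₗ[ℂ] ℂ) :=
    Submodule.span_le.2 fun x hx => LinearMap.mem_ker.2 (hs x hx)
  intro x hx
  have h2 : (Submodule.span ℂ s).topologicalClosure ≤ LinearMap.ker (f : H₀ →ₗ[ℂ] ℂ) :=
    Submodule.topologicalClosure_minimal _ h1 (ContinuousLinearMap.isClosed_ker f)
  exact LinearMap.mem_ker.1 (h2 hx)

lemma dense_vanish (D : DShift d E H₀) (f : H₀ →L[ℂ] ℂ)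
    (hf : ∀ m ζ, f (D.mono m ζ) = 0) (x : H₀) : f x = 0 := by
  apply span_closure_vanish f {x : H₀ | ∃ n ζ, x = D.mono n ζ}
    (by rintro y ⟨m, ζ, rfl⟩; exact hf m ζ)
  rw [D.total]; trivial

lemma orth_all_mono_zero (D : DShift d E H₀) (x : H₀)
    (hx : ∀ m ζ, (inner ℂ (D.mono m ζ) x : ℂ) = 0) : x = 0 := by
  have h := dense_vanish D (innerSL ℂ x)
    (fun m ζ => by rw [innerSL_apply_apply, ← inner_conj_symm, hx m ζ, map_zero]) x
  exact inner_self_eq_zero.mp h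

lemma mono_add_mem (D : DShift d E H₀) (M : Submodule ℂ H₀) (hMinv : IsInvariant D M) :
    ∀ (p m : Fin d → ℕ) (ζ : E), D.mono m ζ ∈ M → D.mono (fun i => m i + p i) ζ ∈ M := by
  suffices h : ∀ (N : ℕ) (p m : Fin d → ℕ) (ζ : E), (∑ i, p i) = N →
      D.mono m ζ ∈ M → D.mono (fun i => m i + p i) ζ ∈ M from
    fun p m ζ => h _ p m ζ rfl
  intro N
  induction N with
  | zero =>
    intro p m ζ hp hm
    have hz : ∀ i, p i = 0 := fun i =>
      Finset.sum_eq_zero_iff.1 hp i (Finset.mem_univ i)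
    have : (fun i => m i + p i) = m := funext fun i => by simp [hz i]
    rw [this]; exact hm
  | succ N ih =>
    intro p m ζ hp hm
    have hex : ∃ i₀, 0 < p i₀ := by
      by_contra h; push_neg at h
      have : ∑ i, p i = 0 := Finset.sum_eq_zero fun i _ => Nat.le_zero.mp (h i)
      omega
    obtain ⟨i₀, hi₀⟩ := hex
    set p' : Fin d → ℕ := fun i => if i = i₀ then p i - 1 else p i with hp'def
    have h1 : ∑ i, p i = p i₀ + ∑ i ∈ Finset.univ.erase i₀, p i :=
      (Finset.add_sum_erase _ p (Finset.mem_univ i₀)).symm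
    have h2 : ∑ i, p' i = p' i₀ + ∑ i ∈ Finset.univ.erase i₀, p' i :=
      (Finset.add_sum_erase _ p' (Finset.mem_univ i₀)).symm
    have h3 : ∑ i ∈ Finset.univ.erase i₀, p' i = ∑ i ∈ Finset.univ.erase i₀, p i :=
      Finset.sum_congr rfl fun i hi => by
        simp [hp'def, Finset.ne_of_mem_erase hi]
    have hpi₀ : p' i₀ = p i₀ - 1 := by simp [hp'def]
    have hsum : ∑ i, p' i = N := by omega
    have hm' := ih p' m ζ hsum hm
    have hS := hMinv i₀ _ hm'
    rw [D.shift_mono] at hS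
    have heq : (fun i => if i = i₀ then (m i + p' i) + 1 else m i + p' i)
        = (fun i => m i + p i) := funext fun i => by
      by_cases h : i = i₀ <;> simp [hp'def, h] <;> omega
    rwa [heq] at hS

lemma gamma_inner (D : DShift d E H₀) (Γ : (Fin d → ℂ) → (H₀ →L[ℂ] H₀))
    (hΓ : ∀ (l : Fin d → ℂ), (∀ i, ‖l i‖ = 1) → ∀ (m : Fin d → ℕ) (ζ : E),
      Γ l (D.mono m ζ) = (∏ i, l i ^ m i) • D.mono m ζ)
    (l : Fin d → ℂ) (hl : ∀ i, ‖l i‖ = 1) (m : Fin d → ℕ) (η : E) (x : H₀) :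
    (inner ℂ (D.mono m η) (Γ l x) : ℂ) = (∏ i, l i ^ m i) * inner ℂ (D.mono m η) x := by
  have key := dense_vanish D
    (((innerSL ℂ (D.mono m η)).comp (Γ l)) - (∏ i, l i ^ m i) • innerSL ℂ (D.mono m η))
    (by
      intro p ζ
      simp only [ContinuousLinearMap.sub_apply, ContinuousLinearMap.comp_apply,
        ContinuousLinearMap.smul_apply, innerSL_apply_apply, hΓ l hl, inner_smul_right,
        D.inner_mono, smul_eq_mul]
      by_cases h : m = p
      · subst h; simp
      · simp [h]) x
  simp only [ContinuousLinearMap.sub_apply, ContinuousLinearMap.comp_apply,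
    ContinuousLinearMap.smul_apply, innerSL_apply_apply, smul_eq_mul, sub_eq_zero] at key
  exact key

open Real in
lemma expI_zpow_inj : Function.Injective (fun a : ℤ => Complex.exp Complex.I ^ a) := by
  intro a b hab
  simp only [← Complex.exp_int_mul] at hab
  rw [Complex.exp_eq_exp_iff_exists_int] at hab
  obtain ⟨j, hj⟩ := hab
  have h1 : ((a : ℂ) - b) * Complex.I = (j : ℂ) * (2 * π) * Complex.I := by
    ring_nf
    ring_nf at hj
    linear_combination hj
  have h2 : ((a : ℂ) - b) = (j : ℂ) * (2 * π) :=
    mul_right_cancel₀ Complex.I_ne_zero h1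
  have h3 : ((a : ℝ) - b) = (j : ℝ) * (2 * π) := by
    have := congrArg Complex.re h2
    simpa using this
  by_contra hne
  have hj0 : j ≠ 0 := by
    rintro rfl; simp at h3; exact hne (by exact_mod_cast sub_eq_zero.mp h3)
  have hπ : π = ((a : ℝ) - b) / (2 * j) := by
    field_simp at h3 ⊢
    linarith [h3]
  exact irrational_pi ⟨((a : ℚ) - b) / (2 * j), by push_cast [hπ]; ring⟩


/-- Let `M ⊆ H²(ℂ^d) ⊗ E` be the closed invariant subspace generated by
`z^{ν₁} ⊗ E₁, …, z^{ν_s} ⊗ E_s` (with distinct multi-indices `ν_k` and subspaces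
`E_k ⊆ E`).  For `n ∈ ℤ^d` let `M(n)` be the spectral subspace
`{ξ ∈ M : Γ(λ)ξ = λ^n ξ for all λ ∈ 𝕋^d}` and let
`E(n) = Σ {E_k : ν_k ≤ n}`.  Then `M(n) = 0` unless `n ≥ 0`, and for `n ≥ 0` one has
`M(n) = z^n ⊗ E(n)`. -/
theorem statement7 {H : Type*} [NormedAddCommGroup H] [InnerProductSpace ℂ H]
    {E : Type*} [NormedAddCommGroup E] [InnerProductSpace ℂ E] [FiniteDimensional ℂ E]
    (d s : ℕ) (D : DShift d E H)
    (ν : Fin s → (Fin d → ℕ)) (hν : Function.Injective ν)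
    (Esub : Fin s → Submodule ℂ E)
    (M : Submodule ℂ H) (hMcl : IsClosed (M : Set H)) (hMinv : IsInvariant D M)
    (hMgen : {x : H | ∃ k ζ, ζ ∈ Esub k ∧ x = D.mono (ν k) ζ} ⊆ (M : Set H) ∧
      ∀ N : Submodule ℂ H, IsClosed (N : Set H) → IsInvariant D N →
        {x : H | ∃ k ζ, ζ ∈ Esub k ∧ x = D.mono (ν k) ζ} ⊆ (N : Set H) → M ≤ N)
    (Γ : (Fin d → ℂ) → (H →L[ℂ] H))
    (hΓ : ∀ (l : Fin d → ℂ), (∀ i, ‖l i‖ = 1) → ∀ (m : Fin d → ℕ) (ζ : E),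
      Γ l (D.mono m ζ) = (∏ i, l i ^ m i) • D.mono m ζ)
    (n : Fin d → ℤ) :
    (¬ (∀ i, 0 ≤ n i) →
        {ξ : H | ξ ∈ M ∧ ∀ (l : Fin d → ℂ), (∀ i, ‖l i‖ = 1) →
          Γ l ξ = (∏ i, l i ^ n i) • ξ} = {0}) ∧
      ((∀ i, 0 ≤ n i) →
        {ξ : H | ξ ∈ M ∧ ∀ (l : Fin d → ℂ), (∀ i, ‖l i‖ = 1) →
          Γ l ξ = (∏ i, l i ^ n i) • ξ} =
        {x : H | ∃ ζ ∈ (⨆ k ∈ {k : Fin s | ∀ i, (ν k i : ℤ) ≤ n i}, Esub k),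
          x = D.mono (fun i => (n i).toNat) ζ}) := by
  classical
  set n₀ : Fin d → ℕ := fun i => (n i).toNat with hn₀
  -- spectral orthogonality
  have hspec_orth : ∀ ξ : H, (∀ (l : Fin d → ℂ), (∀ i, ‖l i‖ = 1) →
      Γ l ξ = (∏ i, l i ^ n i) • ξ) →
      ∀ (m : Fin d → ℕ) (η : E), (fun i => (m i : ℤ)) ≠ n →
        (inner ℂ (D.mono m η) ξ : ℂ) = 0 := by
    intro ξ hξ m η hmn
    obtain ⟨i₀, hi₀⟩ : ∃ i₀, (m i₀ : ℤ) ≠ n i₀ := by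
      by_contra h; push_neg at h; exact hmn (funext h)
    set l : Fin d → ℂ := fun i => if i = i₀ then Complex.exp Complex.I else 1 with hl_def
    have hl : ∀ i, ‖l i‖ = 1 := by
      intro i
      by_cases h : i = i₀ <;>
        simp [hl_def, h, Complex.norm_exp]
    have h1 := gamma_inner D Γ hΓ l hl m η ξ
    rw [hξ l hl, inner_smul_right] at h1
    have hpm : (∏ i, l i ^ m i) = Complex.exp Complex.I ^ (m i₀) := by
      rw [Finset.prod_eq_single i₀ (fun i _ hi => by simp [hl_def, hi])
        (fun h => absurd (Finset.mem_univ i₀) h)]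
      simp [hl_def]
    have hpn : (∏ i, l i ^ n i) = Complex.exp Complex.I ^ (n i₀) := by
      rw [Finset.prod_eq_single i₀ (fun i _ hi => by simp [hl_def, hi])
        (fun h => absurd (Finset.mem_univ i₀) h)]
      simp [hl_def]
    rw [hpm, hpn] at h1
    by_contra hc
    have : Complex.exp Complex.I ^ ((m i₀ : ℤ)) = Complex.exp Complex.I ^ (n i₀) := by
      rw [zpow_natCast]
      exact mul_right_cancel₀ hc h1.symm
    exact hi₀ (expI_zpow_inj this)
  -- the comparison space N
  set Em : (Fin d → ℕ) → Submodule ℂ E :=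
    fun m => ⨆ k ∈ {k : Fin s | ∀ i, ν k i ≤ m i}, Esub k with hEm_def
  set genN : Set H := {x : H | ∃ m η, η ∈ Em m ∧ x = D.mono m η} with hgenN_def
  set N : Submodule ℂ H := (Submodule.span ℂ genN).topologicalClosure with hN_def
  have hEmMono : ∀ {m m' : Fin d → ℕ}, (∀ i, m i ≤ m' i) → Em m ≤ Em m' := by
    intro m m' h
    exact biSup_mono fun k hk i => le_trans (hk i) (h i)
  have hNcl : IsClosed (N : Set H) := Submodule.isClosed_topologicalClosure _
  have hgenN_sub : genN ⊆ (N : Set H) :=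
    fun x hx => Submodule.le_topologicalClosure _ (Submodule.subset_span hx)
  have hNinv : IsInvariant D N := by
    intro k x hx
    have hker : Submodule.span ℂ genN ≤ N.comap (D.S k : H →ₗ[ℂ] H) := by
      rw [Submodule.span_le]
      rintro y ⟨m, η, hη, rfl⟩
      simp only [Set.mem_preimage, SetLike.mem_coe, Submodule.mem_comap,
        ContinuousLinearMap.coe_coe]
      rw [D.shift_mono]
      exact hgenN_sub ⟨_, η, hEmMono (fun i => by by_cases h : i = k <;> simp [h]) hη, rfl⟩
    have hclosed : IsClosed ((N.comap (D.S k : H →ₗ[ℂ] H) : Submodule ℂ H) : Set H) := by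
      have : ((N.comap (D.S k : H →ₗ[ℂ] H) : Submodule ℂ H) : Set H)
          = (D.S k) ⁻¹' (N : Set H) := rfl
      rw [this]
      exact hNcl.preimage (D.S k).continuous
    exact (Submodule.topologicalClosure_minimal _ hker hclosed) hx
  have hMN : M ≤ N := by
    apply hMgen.2 N hNcl hNinv
    rintro x ⟨k, ζ, hζ, rfl⟩
    refine hgenN_sub ⟨ν k, ζ, ?_, rfl⟩
    exact Submodule.mem_iSup_of_mem k (Submodule.mem_iSup_of_mem (fun i => le_refl _) hζ)
  -- monomials with coefficients in Em m lie in M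
  have hEmM : ∀ (m : Fin d → ℕ) (ζ : E), ζ ∈ Em m → D.mono m ζ ∈ M := by
    intro m ζ hζ
    have hle : Em m ≤ Submodule.comap (D.mono m) M := by
      apply iSup_le; intro k; apply iSup_le; intro hk
      intro ζ hζ
      simp only [Submodule.mem_comap]
      have h0 : D.mono (ν k) ζ ∈ M := hMgen.1 ⟨k, ζ, hζ, rfl⟩
      have := mono_add_mem D M hMinv (fun i => m i - ν k i) (ν k) ζ h0
      have heq : (fun i => ν k i + (m i - ν k i)) = m := funext fun i => by
        have := hk i; omega
      rwa [heq] at this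
    exact hle hζ
  constructor
  · -- n not nonnegative
    intro hn
    ext ξ
    simp only [Set.mem_setOf_eq, Set.mem_singleton_iff]
    constructor
    · rintro ⟨hξM, hξs⟩
      apply orth_all_mono_zero D ξ
      intro m ζ
      apply hspec_orth ξ hξs m ζ
      intro h
      apply hn
      intro i
      have := congrFun h i
      omega
    · rintro rfl
      exact ⟨M.zero_mem, fun l hl => by simp⟩
  · -- n nonnegative
    intro hn
    have hcastn : ∀ i, ((n₀ i : ℤ)) = n i := fun i => Int.toNat_of_nonneg (hn i)
    have hcond : ∀ k : Fin s, (∀ i, (ν k i : ℤ) ≤ n i) ↔ (∀ i, ν k i ≤ n₀ i) := by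
      intro k
      constructor <;> intro h i <;> have h1 := h i <;> have h2 := hn i <;>
        simp only [hn₀] at * <;> omega
    have hfwd : (⨆ k ∈ {k : Fin s | ∀ i, (ν k i : ℤ) ≤ n i}, Esub k) ≤ Em n₀ :=
      iSup₂_le fun k hk => le_iSup₂_of_le k ((hcond k).1 hk) le_rfl
    have hbwd : Em n₀ ≤ (⨆ k ∈ {k : Fin s | ∀ i, (ν k i : ℤ) ≤ n i}, Esub k) :=
      iSup₂_le fun k hk => le_iSup₂_of_le k ((hcond k).2 hk) le_rfl
    ext ξ
    simp only [Set.mem_setOf_eq]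
    constructor
    · rintro ⟨hξM, hξs⟩
      have hperp : ∀ (m : Fin d → ℕ) (η : E), m ≠ n₀ →
          (inner ℂ (D.mono m η) ξ : ℂ) = 0 := by
        intro m η hm
        apply hspec_orth ξ hξs m η
        intro h
        apply hm
        funext i
        have hi := congrFun h i
        simp only [hn₀] at hi ⊢
        omega
      set w : ℂ := (daWeight n₀ : ℂ) with hw_def
      have hw : w ≠ 0 := by
        simp only [hw_def, ne_eq, Complex.ofReal_eq_zero]
        exact ne_of_gt (daWeight_pos n₀)
      set L : E →ₗ[ℂ] ℂ := ((innerSL ℂ ξ : H →L[ℂ] ℂ) : H →ₗ[ℂ] ℂ).comp (D.mono n₀) with hL_def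
      set ζ' : E := (InnerProductSpace.toDual ℂ E).symm (LinearMap.toContinuousLinearMap L)
        with hζ'_def
      have hζ'ap : ∀ η : E, (inner ℂ ζ' η : ℂ) = inner ℂ ξ (D.mono n₀ η) := by
        intro η
        rw [hζ'_def, InnerProductSpace.toDual_symm_apply]
        simp [hL_def]
      set ζ : E := w⁻¹ • ζ' with hζ_def
      have hmain : ∀ (m : Fin d → ℕ) (η : E),
          (inner ℂ (D.mono m η) (ξ - D.mono n₀ ζ) : ℂ) = 0 := by
        intro m η
        rw [inner_sub_right]
        by_cases hm : m = n₀
        · subst hm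
          rw [D.inner_mono, if_pos rfl, hζ_def, inner_smul_right]
          have h1 : (inner ℂ (D.mono n₀ η) ξ : ℂ) = inner ℂ η ζ' :=
            calc (inner ℂ (D.mono n₀ η) ξ : ℂ)
                = (starRingEnd ℂ) (inner ℂ ξ (D.mono n₀ η)) := (inner_conj_symm _ _).symm
              _ = (starRingEnd ℂ) (inner ℂ ζ' η) := by rw [hζ'ap]
              _ = inner ℂ η ζ' := inner_conj_symm _ _
          rw [h1, ← hw_def, ← mul_assoc, mul_inv_cancel₀ hw, one_mul, sub_self]
        · rw [hperp m η hm, D.inner_mono, if_neg hm, sub_zero]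
      have hξeq : ξ = D.mono n₀ ζ := by
        have := orth_all_mono_zero D _ hmain
        rwa [sub_eq_zero] at this
      have hξN : ξ ∈ N := hMN hξM
      have hζEm : ζ ∈ Em n₀ := by
        rw [← Submodule.orthogonal_orthogonal (Em n₀)]
        rw [Submodule.mem_orthogonal ((Em n₀)ᗮ) ζ]
        intro η hη
        have hvan : ∀ x ∈ genN, (innerSL ℂ (D.mono n₀ η)) x = 0 := by
          rintro x ⟨m, η', hη', rfl⟩
          rw [innerSL_apply_apply, D.inner_mono]
          by_cases h : n₀ = m
          · subst h
            rw [if_pos rfl]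
            have h0 : (inner ℂ η' η : ℂ) = 0 :=
              (Submodule.mem_orthogonal (Em n₀) η).1 hη η' hη'
            have : (inner ℂ η η' : ℂ) = 0 := by
              rw [← inner_conj_symm, h0, map_zero]
            rw [this, mul_zero]
          · rw [if_neg h]
        have h0 := span_closure_vanish (innerSL ℂ (D.mono n₀ η)) genN hvan ξ hξN
        rw [innerSL_apply_apply, hξeq, D.inner_mono, if_pos rfl] at h0
        rcases mul_eq_zero.mp h0 with h | h
        · exact absurd h hw
        · exact h
      exact ⟨ζ, hbwd hζEm, hξeq⟩
    · rintro ⟨ζ, hζ, rfl⟩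
      have hζ' : ζ ∈ Em n₀ := hfwd hζ
      refine ⟨hEmM n₀ ζ hζ', ?_⟩
      intro l hl
      rw [hΓ l hl]
      congr 1
      apply Finset.prod_congr rfl
      intro i _
      rw [← hcastn i, zpow_natCast]
end Arveson
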